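/- Let G be a compact metrizable Hausdorff topological abelian additive group, θ ∈ G, and let Γ be the topological closure of {k • θ : k ∈ ℕ, k ≥ 1}, which is a compact subgroup of G. Let μ be the Haar probability measure on Γ (with the subspace topology and its Borel σ-algebra). Then the positive semi-orbit of θ is uniformly distributed in Γ: for every continuous function f : G → ℝ, the Birkhoff averages (1/k)·∑_{ℓ=1}^{k} f(ℓ • θ) converge, as k → ∞, to ∫_Γ f(x) dμ(x). -/

import Mathlib

open MeasureTheory Filter Finset

/-- In a compact metrizable Hausdorff topological abelian group `G`, the positive
semi-orbit `{k • θ : k ≥ 1}` of an element `θ` is uniformly distributed in the compact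
subgroup `Γ` obtained as its topological closure: for every continuous `f : G → ℝ`, the
Birkhoff averages `(1/k) ∑_{ℓ=1}^k f (ℓ • θ)` converge to the integral of `f` over `Γ`
with respect to the Haar probability measure `μ` of `Γ`. -/

theorem shift_bound' (u : ℕ → ℝ) (C : ℝ) (hu : ∀ j, |u j| ≤ C) (m n : ℕ) :
    |∑ i ∈ range n, u (m + i) - ∑ i ∈ range n, u i| ≤ 2 * m * C := by
  have h1 := Finset.sum_range_add u m n
  have h2 := Finset.sum_range_add u n m
  have key : ∑ i ∈ range n, u (m + i) - ∑ i ∈ range n, u i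
      = ∑ i ∈ range m, u (n + i) - ∑ i ∈ range m, u i := by
    have : (m : ℕ) + n = n + m := by omega
    rw [this] at h1
    linarith [h1, h2]
  rw [key]
  calc |∑ i ∈ range m, u (n + i) - ∑ i ∈ range m, u i|
      ≤ |∑ i ∈ range m, u (n + i)| + |∑ i ∈ range m, u i| := abs_sub _ _
    _ ≤ (m : ℝ) * C + (m : ℝ) * C := by
        gcongr <;>
        · refine le_trans (Finset.abs_sum_le_sum_abs _ _) ?_
          refine le_trans (Finset.sum_le_sum fun i _ => hu _) ?_
          simp
    _ = 2 * m * C := by ring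

theorem avg_abs_le' (g : ℕ → ℝ) (C : ℝ) (hC : 0 ≤ C) (h : ∀ ℓ, |g ℓ| ≤ C) (n : ℕ) :
    |(1 / (n : ℝ)) * ∑ ℓ ∈ Finset.Icc 1 n, g ℓ| ≤ C := by
  rcases Nat.eq_zero_or_pos n with h0 | h0
  · simp [h0, hC]
  · have hn : (0:ℝ) < n := by exact_mod_cast h0
    rw [abs_mul]
    have h1 : |∑ ℓ ∈ Finset.Icc 1 n, g ℓ| ≤ (n : ℝ) * C := by
      refine le_trans (Finset.abs_sum_le_sum_abs _ _) ?_
      refine le_trans (Finset.sum_le_sum fun i _ => h _) ?_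
      simp [Nat.card_Icc]
    calc |1 / (n:ℝ)| * |∑ ℓ ∈ Finset.Icc 1 n, g ℓ|
        ≤ (1 / (n:ℝ)) * ((n:ℝ) * C) := by
          rw [abs_of_pos (by positivity)]; gcongr
      _ = C := by field_simp

theorem unif_cont' {G : Type*} [AddCommGroup G] [TopologicalSpace G]
    [IsTopologicalAddGroup G] [CompactSpace G]
    (f : G → ℝ) (hf : Continuous f) (ε : ℝ) (hε : 0 < ε) :
    ∃ V ∈ nhds (0 : G), ∀ a b : G, b - a ∈ V → |f a - f b| ≤ ε := by
  letI : UniformSpace G := IsTopologicalAddGroup.rightUniformSpace G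
  haveI : IsUniformAddGroup G := isUniformAddGroup_of_addCommGroup
  have huc : UniformContinuous f := CompactSpace.uniformContinuous_of_continuous hf
  have hmem : {p : ℝ × ℝ | dist p.1 p.2 < ε} ∈ uniformity ℝ := Metric.dist_mem_uniformity hε
  have h2 := huc hmem
  rw [Filter.mem_map, uniformity_eq_comap_nhds_zero' G, Filter.mem_comap] at h2
  obtain ⟨V, hV, hVsub⟩ := h2
  refine ⟨V, hV, fun a b hab => ?_⟩
  have := hVsub (show ((a, b) : G × G) ∈ _ from by simp only [Set.mem_preimage]; rwa [← sub_eq_add_neg])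
  simp only [Set.mem_preimage, Set.mem_setOf_eq, Real.dist_eq] at this
  exact le_of_lt this

theorem semiorbit_uniformly_distributed {G : Type*} [AddCommGroup G] [TopologicalSpace G]
    [IsTopologicalAddGroup G] [CompactSpace G] [T2Space G]
    [TopologicalSpace.MetrizableSpace G] [MeasurableSpace G] [BorelSpace G]
    (θ : G) (Γ : AddSubgroup G)
    (hΓ : (Γ : Set G) = closure {x : G | ∃ k : ℕ, 1 ≤ k ∧ x = k • θ})
    (μ : Measure Γ) [IsProbabilityMeasure μ]
    (hμ : ∀ g : Γ, ∀ s : Set Γ, MeasurableSet s → μ ((fun x => x + g) ⁻¹' s) = μ s)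
    (f : G → ℝ) (hf : Continuous f) :
    Filter.Tendsto
      (fun k : ℕ => (1 / (k : ℝ)) * ∑ ℓ ∈ Finset.Icc 1 k, f (ℓ • θ))
      Filter.atTop (nhds (∫ x : Γ, f (x : G) ∂μ)) := by
  -- instances on Γ
  haveI hBorel : BorelSpace Γ := Subtype.borelSpace (Γ : Set G)
  have hclosed : IsClosed (Γ : Set G) := by rw [hΓ]; exact isClosed_closure
  haveI hCpt : CompactSpace Γ := isCompact_iff_compactSpace.mp hclosed.isCompact
  -- bound on f
  obtain ⟨x₀, -, hx₀⟩ := isCompact_univ.exists_isMaxOn (Set.univ_nonempty)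
    (hf.abs.continuousOn (s := Set.univ))
  set C : ℝ := |f x₀| with hCdef
  have hC0 : 0 ≤ C := abs_nonneg _
  have hC : ∀ x : G, |f x| ≤ C := fun x => hx₀ (Set.mem_univ x)
  -- membership of orbit points
  have hmemΓ : ∀ ℓ : ℕ, 1 ≤ ℓ → ℓ • θ ∈ Γ := by
    intro ℓ hℓ
    have : ℓ • θ ∈ closure {x : G | ∃ k : ℕ, 1 ≤ k ∧ x = k • θ} :=
      subset_closure ⟨ℓ, hℓ, rfl⟩
    rw [← hΓ] at this; exact this
  -- notation
  set D : ℕ → ℝ := fun n => (1 / (n : ℝ)) * ∑ ℓ ∈ Finset.Icc 1 n, f (ℓ • θ) with hD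
  set F : ℕ → Γ → ℝ := fun n y =>
    (1 / (n : ℝ)) * ∑ ℓ ∈ Finset.Icc 1 n, f ((y : G) + ℓ • θ) - D n with hF
  -- invariance of μ under translations
  have hmap : ∀ g : Γ, Measure.map (fun y : Γ => y + g) μ = μ := by
    intro g
    ext s hs
    rw [Measure.map_apply (measurable_add_const g) hs]
    exact hμ g s hs
  have hint : ∀ g : Γ, ∫ y : Γ, f ((y : G) + (g : G)) ∂μ = ∫ y : Γ, f (y : G) ∂μ := by
    intro g
    have hsm : AEStronglyMeasurable (fun y : Γ => f (y : G)) (Measure.map (fun y : Γ => y + g) μ) :=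
      (hf.comp continuous_subtype_val).aestronglyMeasurable
    calc ∫ y : Γ, f ((y : G) + (g : G)) ∂μ
        = ∫ y : Γ, f ((y + g : Γ) : G) ∂μ := by simp
      _ = ∫ y : Γ, f (y : G) ∂(Measure.map (fun y : Γ => y + g) μ) :=
          (integral_map (measurable_add_const g).aemeasurable hsm).symm
      _ = ∫ y : Γ, f (y : G) ∂μ := by rw [hmap g]
  -- integrability of relevant functions
  have hintg : ∀ g : G, Integrable (fun y : Γ => f ((y : G) + g)) μ := by
    intro g
    have hcont : Continuous (fun y : Γ => f ((y : G) + g)) :=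
      hf.comp (continuous_subtype_val.add continuous_const)
    exact hcont.integrable_of_hasCompactSupport (HasCompactSupport.of_compactSpace _)
  -- integral of Birkhoff averages over Γ equals ∫ f for n ≥ 1
  have hIntB : ∀ n : ℕ, 1 ≤ n →
      ∫ y : Γ, (1 / (n : ℝ)) * ∑ ℓ ∈ Finset.Icc 1 n, f ((y : G) + ℓ • θ) ∂μ
        = ∫ y : Γ, f (y : G) ∂μ := by
    intro n hn
    have hne : (n : ℝ) ≠ 0 := by positivity
    rw [integral_const_mul, integral_finset_sum _ (fun ℓ _ => hintg (ℓ • θ))]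
    have heach : ∀ ℓ ∈ Finset.Icc 1 n,
        ∫ y : Γ, f ((y : G) + ℓ • θ) ∂μ = ∫ y : Γ, f (y : G) ∂μ := by
      intro ℓ hℓ
      have hℓ1 : 1 ≤ ℓ := (Finset.mem_Icc.mp hℓ).1
      exact hint ⟨ℓ • θ, hmemΓ ℓ hℓ1⟩
    rw [Finset.sum_congr rfl heach, Finset.sum_const, Nat.card_Icc]
    simp only [Nat.add_sub_cancel, nsmul_eq_mul]
    field_simp
  -- pointwise convergence of F n y to 0
  have hpt : ∀ y : Γ, Tendsto (fun n => F n y) atTop (nhds 0) := by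
    intro y
    rw [NormedAddCommGroup.tendsto_nhds_zero]
    intro ε hε
    obtain ⟨V, hV, hVp⟩ := unif_cont' f hf (ε / 4) (by positivity)
    -- find m with m • θ close to y
    have hyc : (y : G) ∈ closure {x : G | ∃ k : ℕ, 1 ≤ k ∧ x = k • θ} := by
      rw [← hΓ]; exact y.2
    have hU : (fun x : G => x - (y : G)) ⁻¹' V ∈ nhds (y : G) := by
      have hc : ContinuousAt (fun x : G => x - (y : G)) (y : G) :=
        (continuous_id.sub continuous_const).continuousAt
      have h0 : ((y : G) - (y : G)) = 0 := sub_self _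
      exact hc.preimage_mem_nhds (by rwa [h0])
    obtain ⟨x, hxU, m, hm1, rfl⟩ := mem_closure_iff_nhds.mp hyc _ hU
    have hVy : m • θ - (y : G) ∈ V := hxU
    -- eventually bound
    have htend : Tendsto (fun n : ℕ => 2 * (m : ℝ) * C / n) atTop (nhds 0) := by
      simpa using tendsto_const_div_atTop_nhds_zero_nat (2 * (m : ℝ) * C)
    have hev1 : ∀ᶠ n : ℕ in atTop, 2 * (m : ℝ) * C / n < ε / 2 :=
      htend.eventually_lt_const (by positivity)
    filter_upwards [hev1, eventually_ge_atTop 1] with n hn2 hn1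
    have hnpos : (0:ℝ) < n := by exact_mod_cast hn1
    simp only [hF, hD, Real.norm_eq_abs]
    set S1 : ℝ := ∑ ℓ ∈ Finset.Icc 1 n, f ((y : G) + ℓ • θ) with hS1
    set S2 : ℝ := ∑ ℓ ∈ Finset.Icc 1 n, f (ℓ • θ) with hS2
    have h13 : |S1 - (∑ ℓ ∈ Finset.Icc 1 n, f ((m + ℓ) • θ))| ≤ (n : ℝ) * (ε / 4) := by
      rw [hS1, ← Finset.sum_sub_distrib]
      calc |∑ ℓ ∈ Finset.Icc 1 n, (f ((y : G) + ℓ • θ) - f ((m + ℓ) • θ))|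
          ≤ ∑ ℓ ∈ Finset.Icc 1 n, |f ((y : G) + ℓ • θ) - f ((m + ℓ) • θ)| :=
            Finset.abs_sum_le_sum_abs _ _
        _ ≤ ∑ _ℓ ∈ Finset.Icc 1 n, (ε / 4) := by
            refine Finset.sum_le_sum fun ℓ _ => ?_
            have hmemV : (m + ℓ) • θ - ((y : G) + ℓ • θ) ∈ V := by
              have heq : (m + ℓ) • θ - ((y : G) + ℓ • θ) = m • θ - (y : G) := by
                rw [add_nsmul]; abel
              rw [heq]; exact hVy
            exact hVp _ _ hmemV
        _ = (n : ℝ) * (ε / 4) := by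
            rw [Finset.sum_const, Nat.card_Icc, Nat.add_sub_cancel, nsmul_eq_mul]
    have h32 : |(∑ ℓ ∈ Finset.Icc 1 n, f ((m + ℓ) • θ)) - S2| ≤ 2 * (m : ℝ) * C := by
      have hS3' : ∑ ℓ ∈ Finset.Icc 1 n, f ((m + ℓ) • θ)
          = ∑ i ∈ range n, f ((1 + (m + i)) • θ) := by
        rw [← Finset.Ico_add_one_right_eq_Icc, Finset.sum_Ico_eq_sum_range]
        refine Finset.sum_congr (by norm_num) fun i _ => ?_
        congr 2
        omega
      have hS2' : S2 = ∑ i ∈ range n, f ((1 + i) • θ) := by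
        rw [hS2, ← Finset.Ico_add_one_right_eq_Icc, Finset.sum_Ico_eq_sum_range]
        refine Finset.sum_congr (by norm_num) fun i _ => rfl
      rw [hS3', hS2']
      exact shift_bound' (fun j => f ((1 + j) • θ)) C (fun j => hC _) m n
    rw [← mul_sub, abs_mul, abs_of_pos (show (0:ℝ) < 1 / (n:ℝ) by positivity)]
    have h12 : |S1 - S2| ≤ (n : ℝ) * (ε / 4) + 2 * (m : ℝ) * C := by
      calc |S1 - S2| ≤ |S1 - (∑ ℓ ∈ Finset.Icc 1 n, f ((m + ℓ) • θ))|
            + |(∑ ℓ ∈ Finset.Icc 1 n, f ((m + ℓ) • θ)) - S2| := abs_sub_le _ _ _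
        _ ≤ (n : ℝ) * (ε / 4) + 2 * (m : ℝ) * C := add_le_add h13 h32
    calc (1 / (n : ℝ)) * |S1 - S2|
        ≤ (1 / (n : ℝ)) * ((n : ℝ) * (ε / 4) + 2 * (m : ℝ) * C) := by gcongr
      _ = ε / 4 + 2 * (m : ℝ) * C / n := by field_simp
      _ < ε / 4 + ε / 2 := by linarith
      _ < ε := by linarith
  -- dominated convergence
  have hFmeas : ∀ n : ℕ, AEStronglyMeasurable (F n) μ := by
    intro n
    have hcont : Continuous (F n) := by
      rw [hF]
      apply Continuous.sub ?_ continuous_const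
      exact continuous_const.mul (continuous_finset_sum _ fun ℓ _ =>
        hf.comp (continuous_subtype_val.add continuous_const))
    exact hcont.aestronglyMeasurable
  have hbound : ∀ n : ℕ, ∀ᵐ y ∂μ, ‖F n y‖ ≤ 2 * C := by
    intro n
    refine Filter.Eventually.of_forall fun y => ?_
    have h1 : |(1 / (n : ℝ)) * ∑ ℓ ∈ Finset.Icc 1 n, f ((y : G) + ℓ • θ)| ≤ C :=
      avg_abs_le' _ C hC0 (fun ℓ => hC _) n
    have h2 : |D n| ≤ C := by
      rw [hD]; exact avg_abs_le' _ C hC0 (fun ℓ => hC _) n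
    simp only [hF, Real.norm_eq_abs]
    calc |(1 / (n : ℝ)) * (∑ ℓ ∈ Finset.Icc 1 n, f ((y : G) + ℓ • θ)) - D n|
        ≤ |(1 / (n : ℝ)) * ∑ ℓ ∈ Finset.Icc 1 n, f ((y : G) + ℓ • θ)| + |D n| := abs_sub _ _
      _ ≤ 2 * C := by linarith
  have hDCT : Tendsto (fun n => ∫ y : Γ, F n y ∂μ) atTop (nhds (∫ _ : Γ, (0:ℝ) ∂μ)) := by
    refine tendsto_integral_of_dominated_convergence (fun _ => 2 * C) hFmeas
      (integrable_const _) hbound ?_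
    exact Filter.Eventually.of_forall hpt
  rw [integral_zero] at hDCT
  -- identify ∫ F n dμ with ∫ f - D n for n ≥ 1
  have hEq : ∀ᶠ n : ℕ in atTop, ∫ y : Γ, F n y ∂μ = (∫ x : Γ, f (x : G) ∂μ) - D n := by
    filter_upwards [eventually_ge_atTop 1] with n hn
    have hInt1 : Integrable (fun y : Γ =>
        (1 / (n : ℝ)) * ∑ ℓ ∈ Finset.Icc 1 n, f ((y : G) + ℓ • θ)) μ := by
      refine Integrable.const_mul ?_ _
      exact integrable_finset_sum _ fun ℓ _ => hintg (ℓ • θ)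
    simp only [hF]
    rw [integral_sub hInt1 (integrable_const _), hIntB n hn, integral_const]
    simp
  have h2 : Tendsto (fun n => (∫ x : Γ, f (x : G) ∂μ) - D n) atTop (nhds 0) :=
    hDCT.congr' hEq
  have h3 : Tendsto (fun n => D n - (∫ x : Γ, f (x : G) ∂μ)) atTop (nhds 0) := by
    have h4 := h2.neg
    rw [neg_zero] at h4
    simpa using h4
  rw [← tendsto_sub_nhds_zero_iff]
  exact h3
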